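/- For m = 0, 1, 2, 3 let L_m := (1/2)P(φ_{m+1}) + P(φ_{m+2}) + (1/2)P(φ_{m+3}) and B_m := (1/2)P(φ_m) + P(φ_{m+1}) + (3/2)P(φ_{m+2}) + P(φ_{m+3}) (indices mod 4). The intercept-and-resend POVM with elements W_m†W_m = P(φ_m)/2 achieves the minimum bit error rate 1/3: Σ_{m=0}^{3} tr(L_m · P(φ_m)/2) = 1, Σ_{m=0}^{3} tr(B_m · P(φ_m)/2) = 3, so their ratio equals 1/3. -/

import Mathlib

open Matrix Real
open scoped ComplexOrder

noncomputable section

/-- Standard basis vector `e₀` of `ℂ²`. -/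
def e0 : Fin 2 → ℂ := ![1, 0]
/-- Standard basis vector `e₁` of `ℂ²`. -/
def e1 : Fin 2 → ℂ := ![0, 1]

/-- `P(v) = v v†`, the rank-one matrix associated with `v ∈ ℂ²`. -/
def P (v : Fin 2 → ℂ) : Matrix (Fin 2) (Fin 2) ℂ := vecMulVec v (star v)

/-- The rotation `R = cos(π/4)·I + sin(π/4)·(e₁e₀† - e₀e₁†)`. -/
def Rrot : Matrix (Fin 2) (Fin 2) ℂ :=
  (Real.cos (π / 4) : ℂ) • 1 +
    (Real.sin (π / 4) : ℂ) • (vecMulVec e1 (star e0) - vecMulVec e0 (star e1))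

/-- The SARG04 states `φ_m = R^{-m} φ₀` with `φ₀ = cos(π/8) e₀ + sin(π/8) e₁`,
indices effectively taken modulo 4. -/
def φ (m : ℤ) : Fin 2 → ℂ :=
  (Rrot ^ (-m)).mulVec ((Real.cos (π / 8) : ℂ) • e0 + (Real.sin (π / 8) : ℂ) • e1)
/-- `L_m` for the single-photon SARG04 intercept-and-resend analysis (indices mod 4). -/
def Lm (m : ℤ) : Matrix (Fin 2) (Fin 2) ℂ :=
  ((1 : ℂ) / 2) • P (φ (m + 1)) + P (φ (m + 2)) + ((1 : ℂ) / 2) • P (φ (m + 3))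

/-- `B_m` for the single-photon SARG04 intercept-and-resend analysis (indices mod 4). -/
def Bm (m : ℤ) : Matrix (Fin 2) (Fin 2) ℂ :=
  ((1 : ℂ) / 2) • P (φ m) + P (φ (m + 1)) + ((3 : ℂ) / 2) • P (φ (m + 2)) + P (φ (m + 3))

/-- The real unit vector at angle `θ`, viewed in `ℂ²`. -/
def vθ (θ : ℝ) : Fin 2 → ℂ := ![(Real.cos θ : ℂ), (Real.sin θ : ℂ)]

lemma Rrot_mulVec (θ : ℝ) : Rrot.mulVec (vθ θ) = vθ (θ + π / 4) := by
  funext i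
  fin_cases i <;>
    simp only [Rrot, vθ, e0, e1, Matrix.mulVec, dotProduct, Fin.sum_univ_two, Matrix.add_apply,
      Matrix.smul_apply, Matrix.sub_apply, Matrix.vecMulVec_apply, Matrix.one_apply, Pi.star_apply] <;>
    simp [Real.cos_add, Real.sin_add] <;>
    push_cast <;> ring

lemma Rrot_det : IsUnit Rrot.det := by
  have h : Rrot.det = 1 := by
    simp only [Rrot, Matrix.det_fin_two, Matrix.add_apply, Matrix.smul_apply,
      Matrix.one_apply, Matrix.sub_apply, Matrix.vecMulVec_apply, e0, e1]
    norm_num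
    have hs2 : ((Real.sqrt 2 : ℂ)) ^ 2 = 2 := by
      have h2 : (Real.sqrt 2) ^ 2 = 2 := Real.sq_sqrt (by norm_num)
      exact_mod_cast congrArg Complex.ofReal h2
    linear_combination hs2 / 2
  rw [h]; exact isUnit_one

lemma Rrot_inv_mulVec (θ : ℝ) : Rrot⁻¹.mulVec (vθ θ) = vθ (θ - π / 4) := by
  have h := Rrot_mulVec (θ - π / 4)
  rw [sub_add_cancel] at h
  rw [← h, Matrix.mulVec_mulVec, Matrix.nonsing_inv_mul _ Rrot_det, Matrix.one_mulVec]

lemma phi_eq (m : ℤ) : φ m = vθ (π / 8 - m * (π / 4)) := by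
  have hφ0 : ((Real.cos (π / 8) : ℂ) • e0 + (Real.sin (π / 8) : ℂ) • e1) = vθ (π / 8) := by
    funext i; fin_cases i <;> simp only [vθ, e0, e1] <;>
      simp [Pi.add_apply, Pi.smul_apply, smul_eq_mul]
  induction m using Int.induction_on with
  | zero =>
    unfold φ
    rw [neg_zero, zpow_zero, Matrix.one_mulVec, hφ0]
    congr 1
    push_cast; ring
  | succ n ih =>
    have hexp : Rrot ^ (-((n : ℤ) + 1)) = Rrot⁻¹ * Rrot ^ (-(n : ℤ)) := by
      rw [show -((n : ℤ) + 1) = -1 + -(n : ℤ) by ring, Matrix.zpow_add Rrot_det,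
        Matrix.zpow_neg_one]
    unfold φ at ih ⊢
    rw [hexp, ← Matrix.mulVec_mulVec, ih, Rrot_inv_mulVec]
    congr 1
    push_cast; ring
  | pred n ih =>
    have hexp : Rrot ^ (-(-(n : ℤ) - 1)) = Rrot * Rrot ^ ((n : ℤ)) := by
      rw [show -(-(n : ℤ) - 1) = 1 + (n : ℤ) by ring, Matrix.zpow_add Rrot_det, zpow_one]
    have hneg : -(-(n : ℤ)) = (n : ℤ) := by ring
    unfold φ at ih ⊢
    rw [hneg] at ih
    rw [hexp, ← Matrix.mulVec_mulVec, ih, Rrot_mulVec]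
    congr 1
    push_cast; ring

lemma trace_PP (a b : ℝ) :
    (P (vθ a) * P (vθ b)).trace = ((Real.cos (a - b) : ℝ) : ℂ) ^ 2 := by
  simp only [P, vθ, Matrix.trace, Matrix.mul_apply, Matrix.vecMulVec_apply, Fin.sum_univ_two,
    Matrix.diag, Pi.star_apply, Matrix.cons_val_zero, Matrix.cons_val_one, Matrix.head_cons,
    RCLike.star_def, Complex.conj_ofReal, Finset.sum_add_distrib]
  rw [Real.cos_sub]
  push_cast
  ring

lemma cos_sq_pi4 : Real.cos (π / 4) ^ 2 = 1 / 2 := by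
  rw [Real.cos_pi_div_four, div_pow, Real.sq_sqrt] <;> norm_num

lemma cos_sq_3pi4 : Real.cos (3 * (π / 4)) ^ 2 = 1 / 2 := by
  rw [show (3 : ℝ) * (π / 4) = π - π / 4 by ring, Real.cos_pi_sub, neg_sq]
  exact cos_sq_pi4

lemma cos_2pi4 : Real.cos (2 * (π / 4)) = 0 := by
  rw [show (2 : ℝ) * (π / 4) = π / 2 by ring, Real.cos_pi_div_two]

lemma traceL (m : ℤ) : (Lm m * (((1 : ℂ) / 2) • P (φ m))).trace = 1 / 4 := by
  simp only [Lm, phi_eq, Matrix.add_mul, smul_mul_assoc, Matrix.mul_smul, Matrix.trace_add,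
    Matrix.trace_smul, trace_PP, smul_eq_mul]
  have e1 : (π / 8 - ((m + 1 : ℤ) : ℝ) * (π / 4)) - (π / 8 - ((m : ℤ) : ℝ) * (π / 4))
      = -(1 * (π / 4)) := by push_cast; ring
  have e2 : (π / 8 - ((m + 2 : ℤ) : ℝ) * (π / 4)) - (π / 8 - ((m : ℤ) : ℝ) * (π / 4))
      = -(2 * (π / 4)) := by push_cast; ring
  have e3 : (π / 8 - ((m + 3 : ℤ) : ℝ) * (π / 4)) - (π / 8 - ((m : ℤ) : ℝ) * (π / 4))
      = -(3 * (π / 4)) := by push_cast; ring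
  rw [e1, e2, e3, Real.cos_neg, Real.cos_neg, Real.cos_neg]
  have h1 : Real.cos (1 * (π / 4)) ^ 2 = 1 / 2 := by rw [one_mul]; exact cos_sq_pi4
  simp only [← Complex.ofReal_pow, h1, cos_2pi4, cos_sq_3pi4]
  push_cast
  norm_num

lemma traceB (m : ℤ) : (Bm m * (((1 : ℂ) / 2) • P (φ m))).trace = 3 / 4 := by
  simp only [Bm, phi_eq, Matrix.add_mul, smul_mul_assoc, Matrix.mul_smul, Matrix.trace_add,
    Matrix.trace_smul, trace_PP, smul_eq_mul]
  have e0 : (π / 8 - ((m : ℤ) : ℝ) * (π / 4)) - (π / 8 - ((m : ℤ) : ℝ) * (π / 4)) = 0 := by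
    ring
  have e1 : (π / 8 - ((m + 1 : ℤ) : ℝ) * (π / 4)) - (π / 8 - ((m : ℤ) : ℝ) * (π / 4))
      = -(1 * (π / 4)) := by push_cast; ring
  have e2 : (π / 8 - ((m + 2 : ℤ) : ℝ) * (π / 4)) - (π / 8 - ((m : ℤ) : ℝ) * (π / 4))
      = -(2 * (π / 4)) := by push_cast; ring
  have e3 : (π / 8 - ((m + 3 : ℤ) : ℝ) * (π / 4)) - (π / 8 - ((m : ℤ) : ℝ) * (π / 4))
      = -(3 * (π / 4)) := by push_cast; ring
  rw [e0, e1, e2, e3, Real.cos_neg, Real.cos_neg, Real.cos_neg, Real.cos_zero]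
  have h1 : Real.cos (1 * (π / 4)) ^ 2 = 1 / 2 := by rw [one_mul]; exact cos_sq_pi4
  simp only [← Complex.ofReal_pow, h1, cos_2pi4, cos_sq_3pi4]
  push_cast
  norm_num


/-- The simple intercept-and-resend POVM with elements `P(φ_m)/2` achieves the minimum
bit error rate `1/3`: the error weight is `1`, the total weight is `3`, and their
ratio is `1/3`. -/
theorem sarg04_simple_intercept_resend_achieves_third :
    (∑ m : Fin 4, (Lm (m : ℤ) * (((1 : ℂ) / 2) • P (φ (m : ℤ)))).trace = 1) ∧
    (∑ m : Fin 4, (Bm (m : ℤ) * (((1 : ℂ) / 2) • P (φ (m : ℤ)))).trace = 3) ∧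
    (∑ m : Fin 4, (Lm (m : ℤ) * (((1 : ℂ) / 2) • P (φ (m : ℤ)))).trace)
        / (∑ m : Fin 4, (Bm (m : ℤ) * (((1 : ℂ) / 2) • P (φ (m : ℤ)))).trace)
      = 1 / 3 := by
  have hL : (∑ m : Fin 4, (Lm (m : ℤ) * (((1 : ℂ) / 2) • P (φ (m : ℤ)))).trace = 1) := by
    rw [Fin.sum_univ_four]
    simp only [traceL]
    norm_num
  have hB : (∑ m : Fin 4, (Bm (m : ℤ) * (((1 : ℂ) / 2) • P (φ (m : ℤ)))).trace = 3) := by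
    rw [Fin.sum_univ_four]
    simp only [traceB]
    norm_num
  exact ⟨hL, hB, by rw [hL, hB]⟩

end
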